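/- Let p, q, r be reals with p > 0, q > 0, r = 1 − p − q ≥ 0, and (1−p)² − pq > 0. Let {P_n} be the orthogonal polynomials defined by the recurrence P₀ = 1, P₁(x) = x, x P₁(x) = P₂(x) + r P₁(x) + q P₀(x), and x P_n(x) = P_{n+1}(x) + r P_n(x) + pq P_{n−1}(x) for n ≥ 2 (free Meixner with parameters q, pq, r). Define the normalized polynomials p₀ = 1 and p_n(x) = P_n(x)/√(q (pq)^{n−1}) for n ≥ 1. Then at ξ = −q/(1−p), one has p_n(ξ) = (1/√p) · (−√(pq)/(1−p))^n for all n ≥ 1. -/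

import Mathlib

theorem stmt16 (p q r : ℝ) (hp : 0 < p) (hq : 0 < q) (hr : r = 1 - p - q)
    (hr0 : 0 ≤ r) (hatom : 0 < (1 - p) ^ 2 - p * q)
    (P : ℕ → ℝ → ℝ)
    (hP0 : ∀ x, P 0 x = 1) (hP1 : ∀ x, P 1 x = x)
    (hrec1 : ∀ x, x * P 1 x = P 2 x + r * P 1 x + q * P 0 x)
    (hrec : ∀ n : ℕ, 2 ≤ n → ∀ x,
      x * P n x = P (n + 1) x + r * P n x + p * q * P (n - 1) x)
    (n : ℕ) (hn : 1 ≤ n) :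
    P n (-q / (1 - p)) / Real.sqrt (q * (p * q) ^ (n - 1)) =
      (1 / Real.sqrt p) * (-(Real.sqrt (p * q)) / (1 - p)) ^ n := by
  have h1p : 0 < 1 - p := by nlinarith
  have h1p' : (1 - p) ≠ 0 := h1p.ne'
  set ξ : ℝ := -q / (1 - p) with hξ
  -- closed form for P n ξ
  have key : ∀ m : ℕ, 1 ≤ m →
      P m ξ = (-1) ^ m * q ^ m * p ^ m / (p * (1 - p) ^ m) ∧
      P (m + 1) ξ = (-1) ^ (m + 1) * q ^ (m + 1) * p ^ (m + 1) / (p * (1 - p) ^ (m + 1)) := by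
    intro m hm
    induction m, hm using Nat.le_induction with
    | base =>
      constructor
      · rw [hP1, hξ]
        field_simp
      · have h2 := hrec1 ξ
        rw [hP1, hP0] at h2
        have : P 2 ξ = ξ * ξ - r * ξ - q := by linarith
        rw [this, hξ, hr]
        field_simp
        ring
    | succ m hm ih =>
      refine ⟨ih.2, ?_⟩
      have h2 := hrec (m + 1) (by omega) ξ
      simp only [Nat.add_sub_cancel] at h2
      have hP2 : P (m + 1 + 1) ξ = ξ * P (m + 1) ξ - r * P (m + 1) ξ - p * q * P m ξ := by
        linarith
      rw [hP2, ih.1, ih.2, hξ, hr]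
      field_simp
      ring
  obtain ⟨m, rfl⟩ : ∃ m, n = m + 1 := ⟨n - 1, by omega⟩
  have hPn := (key (m + 1) (by omega)).1
  rw [hPn]
  simp only [Nat.add_sub_cancel]
  set a := Real.sqrt p with hadef
  set b := Real.sqrt q with hbdef
  have ha : a ^ 2 = p := Real.sq_sqrt hp.le
  have hb : b ^ 2 = q := Real.sq_sqrt hq.le
  have ha0 : 0 < a := Real.sqrt_pos.mpr hp
  have hb0 : 0 < b := Real.sqrt_pos.mpr hq
  have hab : Real.sqrt (p * q) = a * b := by
    rw [hadef, hbdef, Real.sqrt_mul hp.le]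
  have hden : Real.sqrt (q * (p * q) ^ m) = b * (a * b) ^ m := by
    have h1 : q * (p * q) ^ m = (b * (a * b) ^ m) ^ 2 := by
      rw [← ha, ← hb]; ring
    rw [h1, Real.sqrt_sq (by positivity)]
  rw [hden, hab, ← ha, ← hb]
  have h' : (1 : ℝ) - a ^ 2 ≠ 0 := by rw [ha]; exact h1p'
  rw [one_div_mul_eq_div, div_div, div_pow, div_div, div_eq_div_iff (by simp [ha0.ne', hb0.ne', h']) (by simp [ha0.ne', h'])]
  ring
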